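/- Let V ∈ ℂ^{n×n} be invertible, A₁,…,A_N ∈ ℝ^{n×n}, Λ_i = V⁻¹ A_i V, and Λ = max_i 𝓜(Λ_i) (entrywise maximum). If Λ is Hurwitz, then each A_i is Hurwitz and the matrices A_i admit a common quadratic Lyapunov function, i.e., there exists a real symmetric positive definite P with A_i'P + P A_i < 0 for all i. -/

import Mathlib

open Matrix

open Finset

variable {n : ℕ}


lemma sum_pos_of_mem_simplex {u : Fin n → ℝ} (hu : u ∈ stdSimplex ℝ (Fin n)) :
    ∃ b, 0 < u b := by
  by_contra h
  push_neg at h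
  have : ∑ b, u b = 0 := le_antisymm (Finset.sum_nonpos fun b _ => h b) (by
    exact (Finset.sum_nonneg fun b _ => hu.1 b))
  rw [hu.2] at this; norm_num at this

lemma mulVec_pos {B : Matrix (Fin n) (Fin n) ℝ} (hB : ∀ a b, 0 < B a b)
    {u : Fin n → ℝ} (hu0 : ∀ b, 0 ≤ u b) (hub : ∃ b, 0 < u b) (a : Fin n) :
    0 < (B *ᵥ u) a := by
  obtain ⟨b, hb⟩ := hub
  refine Finset.sum_pos' (fun c _ => mul_nonneg (hB a c).le (hu0 c)) ⟨b, Finset.mem_univ b, ?_⟩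
  exact mul_pos (hB a b) hb

lemma cw_eigen (hn : 0 < n) (B : Matrix (Fin n) (Fin n) ℝ) (hB : ∀ a b, 0 < B a b) :
    ∃ (r : ℝ) (u : Fin n → ℝ), 0 < r ∧ (∀ a, 0 < u a) ∧ u ∈ stdSimplex ℝ (Fin n) ∧
      B *ᵥ u = r • u := by
  haveI : NeZero n := ⟨hn.ne'⟩
  set Δ : Set (Fin n → ℝ) := stdSimplex ℝ (Fin n) with hΔ
  set σ : (Fin n → ℝ) → ℝ := fun u => ∑ a, (B *ᵥ u) a with hσ
  set T : (Fin n → ℝ) → (Fin n → ℝ) := fun u => (σ u)⁻¹ • (B *ᵥ u) with hT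
  have hσpos : ∀ u ∈ Δ, 0 < σ u := by
    intro u hu
    exact Finset.sum_pos (fun a _ => mulVec_pos hB hu.1 (sum_pos_of_mem_simplex hu) a)
      ⟨⟨0, hn⟩, Finset.mem_univ _⟩
  -- K = T '' Δ
  set K : Set (Fin n → ℝ) := T '' Δ with hK
  have hTmem : ∀ u ∈ Δ, T u ∈ Δ ∧ ∀ a, 0 < T u a := by
    intro u hu
    have hσu := hσpos u hu
    have hpos : ∀ a, 0 < T u a := fun a => by
      simp only [hT, Pi.smul_apply, smul_eq_mul]
      exact mul_pos (inv_pos.mpr hσu) (mulVec_pos hB hu.1 (sum_pos_of_mem_simplex hu) a)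
    refine ⟨⟨fun a => (hpos a).le, ?_⟩, hpos⟩
    simp only [hT, Pi.smul_apply, smul_eq_mul, ← Finset.mul_sum]
    exact inv_mul_cancel₀ hσu.ne'
  have hKΔ : K ⊆ Δ := by rintro v ⟨u, hu, rfl⟩; exact (hTmem u hu).1
  have hKpos : ∀ v ∈ K, ∀ a, 0 < v a := by rintro v ⟨u, hu, rfl⟩; exact (hTmem u hu).2
  have hBcont : Continuous fun u : Fin n → ℝ => B *ᵥ u :=
    continuous_const.matrix_mulVec continuous_id
  have hσcont : Continuous σ := by
    apply continuous_finset_sum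
    intro a _
    exact (continuous_apply a).comp hBcont
  have hTcontOn : ContinuousOn T Δ := by
    refine ContinuousOn.smul (f := fun u => (σ u)⁻¹) (g := fun u => B *ᵥ u) ?_ ?_
    · exact (hσcont.continuousOn).inv₀ (fun u hu => (hσpos u hu).ne')
    · exact hBcont.continuousOn
  have hKcompact : IsCompact K := (isCompact_stdSimplex _ _).image_of_continuousOn hTcontOn
  have hKne : K.Nonempty := by
    refine ⟨T (fun _ => (n : ℝ)⁻¹), ⟨_, ?_, rfl⟩⟩
    constructor
    · intro a; positivity
    · simp [Finset.card_univ]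
  -- the function h
  have huniv : (Finset.univ : Finset (Fin n)).Nonempty := Finset.univ_nonempty
  set h : (Fin n → ℝ) → ℝ := fun v => Finset.univ.inf' huniv (fun a => (B *ᵥ v) a / v a) with hh
  have hhcont : ContinuousOn h K := by
    apply ContinuousOn.finset_inf'_apply huniv
    intro a _
    exact ((continuous_apply a).comp hBcont).continuousOn.div
      (continuous_apply a).continuousOn (fun v hv => (hKpos v hv a).ne')
  obtain ⟨u, huK, hmax⟩ := hKcompact.exists_isMaxOn hKne hhcont
  set r : ℝ := h u with hr
  have hupos : ∀ a, 0 < u a := hKpos u huK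
  have huΔ : u ∈ Δ := hKΔ huK
  have hrpos : 0 < r := by
    rw [hr, hh]
    rw [Finset.lt_inf'_iff]
    intro a _
    exact div_pos (mulVec_pos hB (fun b => (hupos b).le) ⟨_, hupos ⟨0, hn⟩⟩ a) (hupos a)
  have hle : ∀ a, r * u a ≤ (B *ᵥ u) a := by
    intro a
    have this : r ≤ (B *ᵥ u) a / u a := Finset.inf'_le _ (Finset.mem_univ a)
    calc r * u a ≤ ((B *ᵥ u) a / u a) * u a := by
          exact mul_le_mul_of_nonneg_right this (hupos a).le
      _ = (B *ᵥ u) a := div_mul_cancel₀ _ (hupos a).ne'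
  -- equality
  have heq : ∀ a, (B *ᵥ u) a = r * u a := by
    by_contra hcon
    push_neg at hcon
    obtain ⟨c, hc⟩ := hcon
    have hc' : r * u c < (B *ᵥ u) c := lt_of_le_of_ne (hle c) (Ne.symm hc)
    -- consider w = T u
    have hwK : T u ∈ K := ⟨u, huΔ, rfl⟩
    have hσu := hσpos u huΔ
    have hkey : ∀ a, r < (B *ᵥ (T u)) a / (T u) a := by
      intro a
      have h1 : r * (B *ᵥ u) a < (B *ᵥ (B *ᵥ u)) a := by
        have : ∀ b ∈ Finset.univ, B a b * (r * u b) ≤ B a b * (B *ᵥ u) b :=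
          fun b _ => mul_le_mul_of_nonneg_left (hle b) (hB a b).le
        have hstrict : B a c * (r * u c) < B a c * (B *ᵥ u) c :=
          mul_lt_mul_of_pos_left hc' (hB a c)
        calc r * (B *ᵥ u) a = ∑ b, B a b * (r * u b) := by
              simp only [mulVec, dotProduct, Finset.mul_sum]
              exact Finset.sum_congr rfl fun b _ => by ring
          _ < ∑ b, B a b * (B *ᵥ u) b :=
              Finset.sum_lt_sum this ⟨c, Finset.mem_univ c, hstrict⟩
          _ = (B *ᵥ (B *ᵥ u)) a := rfl
      have hTa : (T u) a = (σ u)⁻¹ * (B *ᵥ u) a := rfl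
      have hBTa : (B *ᵥ (T u)) a = (σ u)⁻¹ * (B *ᵥ (B *ᵥ u)) a := by
        simp only [hT, Matrix.mulVec_smul, Pi.smul_apply, smul_eq_mul]
      rw [hBTa, hTa]
      have hden : 0 < (σ u)⁻¹ * (B *ᵥ u) a :=
        mul_pos (inv_pos.mpr hσu) (mulVec_pos hB (fun b => (hupos b).le) ⟨_, hupos ⟨0, hn⟩⟩ a)
      rw [lt_div_iff₀ hden]
      calc r * ((σ u)⁻¹ * (B *ᵥ u) a) = (σ u)⁻¹ * (r * (B *ᵥ u) a) := by ring
        _ < (σ u)⁻¹ * (B *ᵥ (B *ᵥ u)) a := by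
            exact mul_lt_mul_of_pos_left h1 (by positivity)
    have : r < h (T u) := by
      rw [hh, Finset.lt_inf'_iff]
      exact fun a _ => hkey a
    exact absurd (hmax hwK) (not_le.mpr this)
  refine ⟨r, u, hrpos, hupos, huΔ, ?_⟩
  funext a
  rw [heq a]; simp [mul_comm]
lemma metzler_exists_pos_vec (Λ : Matrix (Fin n) (Fin n) ℝ)
    (hMetz : ∀ a b, a ≠ b → 0 ≤ Λ a b)
    (hno : ∀ (μ : ℝ) (u : Fin n → ℝ), 0 ≤ μ → (∀ a, 0 ≤ u a) → u ≠ 0 → Λ *ᵥ u ≠ μ • u) :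
    ∃ c : Fin n → ℝ, (∀ a, 0 < c a) ∧ ∀ a, (Λ *ᵥ c) a < 0 := by
  rcases Nat.eq_zero_or_pos n with hn | hn
  · subst hn
    exact ⟨fun _ => 1, fun a => a.elim0, fun a => a.elim0⟩
  set s : ℝ := 1 + ∑ a, ∑ b, |Λ a b| with hs
  have hs1 : 1 ≤ s := by
    rw [hs]
    have : (0:ℝ) ≤ ∑ a, ∑ b, |Λ a b| :=
      Finset.sum_nonneg fun a _ => Finset.sum_nonneg fun b _ => abs_nonneg _
    linarith
  have habs_le : ∀ a b, |Λ a b| ≤ s := by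
    intro a b
    rw [hs]
    have h1 : |Λ a b| ≤ ∑ b', |Λ a b'| :=
      Finset.single_le_sum (f := fun b' => |Λ a b'|) (fun b' _ => abs_nonneg _)
        (Finset.mem_univ b)
    have h2 : ∑ b', |Λ a b'| ≤ ∑ a', ∑ b', |Λ a' b'| :=
      Finset.single_le_sum (f := fun a' => ∑ b', |Λ a' b'|)
        (fun a' _ => Finset.sum_nonneg fun b' _ => abs_nonneg _) (Finset.mem_univ a)
    linarith
  set ε : ℕ → ℝ := fun k => ((k : ℝ) + 1)⁻¹ with hε
  have hεpos : ∀ k, 0 < ε k := fun k => by positivity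
  have hεle1 : ∀ k, ε k ≤ 1 := fun k =>
    inv_le_one_of_one_le₀ (le_add_of_nonneg_left (Nat.cast_nonneg k))
  set B : ℕ → Matrix (Fin n) (Fin n) ℝ :=
    fun k a b => Λ a b + ε k + (if a = b then s else 0) with hB
  have hBpos : ∀ k a b, 0 < B k a b := by
    intro k a b
    rcases eq_or_ne a b with rfl | hab
    · have hBaa : B k a a = Λ a a + ε k + s := by simp [hB]
      rw [hBaa]
      have h1 := abs_le.mp (habs_le a a)
      have h2 := hεpos k
      linarith [h1.1]
    · simp only [hB, if_neg hab]
      have := hMetz a b hab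
      have := hεpos k
      linarith
  have H : ∀ k, ∃ (r : ℝ) (u : Fin n → ℝ), 0 < r ∧ (∀ a, 0 < u a) ∧
      u ∈ stdSimplex ℝ (Fin n) ∧ B k *ᵥ u = r • u :=
    fun k => cw_eigen hn (B k) (hBpos k)
  choose r u hr hu hΔ heig using H
  -- key identity
  have hid : ∀ k a, (Λ *ᵥ u k) a = (r k - s) * u k a - ε k := by
    intro k a
    have h1 : (B k *ᵥ u k) a = (Λ *ᵥ u k) a + ε k + s * u k a := by
      have e1 : ∀ b, B k a b * u k b
          = Λ a b * u k b + ε k * u k b + (if a = b then s * u k b else 0) := by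
        intro b; simp only [hB]; split <;> ring
      have p2 : ∑ b, ε k * u k b = ε k := by
        rw [← Finset.mul_sum, (hΔ k).2, mul_one]
      have p3 : ∑ b, (if a = b then s * u k b else 0) = s * u k a := by simp
      show ∑ b, B k a b * u k b = _
      simp only [e1, Finset.sum_add_distrib]
      rw [p2, p3]
      rfl
    have h2 : (B k *ᵥ u k) a = r k * u k a := by rw [heig k]; rfl
    rw [h2] at h1
    linarith
  by_cases hcase : ∃ k, r k ≤ s
  · obtain ⟨k, hk⟩ := hcase
    refine ⟨u k, hu k, fun a => ?_⟩
    rw [hid k a]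
    have h3 : (r k - s) * u k a ≤ 0 :=
      mul_nonpos_of_nonpos_of_nonneg (by linarith) (hu k a).le
    have := hεpos k
    linarith
  · push_neg at hcase
    exfalso
    set μ : ℕ → ℝ := fun k => r k - s with hμ
    have hμpos : ∀ k, 0 < μ k := fun k => sub_pos.mpr (hcase k)
    have hμbd : ∀ k, μ k ≤ (s + 1) * n := by
      intro k
      -- pick a with u k a ≥ 1/n
      have hbig : ∃ a, (n : ℝ)⁻¹ ≤ u k a := by
        by_contra hcon
        push_neg at hcon
        have h7 : ∑ a, u k a < ∑ a : Fin n, (n : ℝ)⁻¹ :=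
          Finset.sum_lt_sum_of_nonempty ⟨⟨0, hn⟩, Finset.mem_univ _⟩ fun a _ => hcon a
        rw [(hΔ k).2, Finset.sum_const, Finset.card_univ, Fintype.card_fin, nsmul_eq_mul,
          mul_inv_cancel₀ (by positivity : (n:ℝ) ≠ 0)] at h7
        exact lt_irrefl _ h7
      obtain ⟨a, ha⟩ := hbig
      have hub : ∀ b, u k b ≤ 1 := by
        intro b
        have h8 := Finset.single_le_sum (f := u k) (fun b' _ => (hΔ k).1 b') (Finset.mem_univ b)
        rw [(hΔ k).2] at h8
        exact h8
      have hΛu : (Λ *ᵥ u k) a ≤ s := by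
        calc (Λ *ᵥ u k) a = ∑ b, Λ a b * u k b := rfl
          _ ≤ ∑ b, |Λ a b * u k b| :=
              Finset.sum_le_sum fun b _ => le_abs_self _
          _ ≤ ∑ b, |Λ a b| := Finset.sum_le_sum fun b _ => by
              rw [abs_mul]
              calc |Λ a b| * |u k b| ≤ |Λ a b| * 1 :=
                    mul_le_mul_of_nonneg_left (by
                      rw [abs_of_nonneg ((hΔ k).1 b)]; exact hub b) (abs_nonneg _)
                _ = |Λ a b| := mul_one _
          _ ≤ ∑ a', ∑ b, |Λ a' b| :=
              Finset.single_le_sum (f := fun a' => ∑ b, |Λ a' b|)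
                (fun a' _ => Finset.sum_nonneg fun b _ => abs_nonneg _) (Finset.mem_univ a)
          _ ≤ s := by rw [hs]; linarith
      have h4 : μ k * u k a = (Λ *ᵥ u k) a + ε k := by rw [hid k a]; ring
      have h5 : μ k * (n:ℝ)⁻¹ ≤ μ k * u k a :=
        mul_le_mul_of_nonneg_left ha (hμpos k).le
      have h6 : μ k * (n:ℝ)⁻¹ ≤ s + 1 := by
        rw [h4] at h5
        have := hεle1 k
        linarith
      have hn' : (0:ℝ) < n := by exact_mod_cast hn
      calc μ k = (μ k * (n:ℝ)⁻¹) * n := by field_simp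
        _ ≤ (s + 1) * n := mul_le_mul_of_nonneg_right h6 hn'.le
    -- compactness: limit point
    set X : ℕ → (Fin n → ℝ) × ℝ := fun k => (u k, μ k) with hX
    have hXmem : ∀ k, X k ∈ (stdSimplex ℝ (Fin n)) ×ˢ (Set.Icc (0:ℝ) ((s+1)*n)) :=
      fun k => ⟨hΔ k, ⟨(hμpos k).le, hμbd k⟩⟩
    have hcomp : IsCompact ((stdSimplex ℝ (Fin n)) ×ˢ (Set.Icc (0:ℝ) ((s+1)*n))) :=
      (isCompact_stdSimplex _ _).prod isCompact_Icc
    obtain ⟨⟨v, ν⟩, hvmem, φ, hφ, hlim⟩ := hcomp.tendsto_subseq hXmem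
    have hulim : Filter.Tendsto (fun k => u (φ k)) Filter.atTop (nhds v) :=
      (continuous_fst.tendsto _).comp hlim
    have hμlim : Filter.Tendsto (fun k => μ (φ k)) Filter.atTop (nhds ν) :=
      (continuous_snd.tendsto _).comp hlim
    -- Λ *ᵥ u k - μ k • u k = (- ε k) • 1
    have hid2 : ∀ k, Λ *ᵥ u k - μ k • u k = (-(ε k)) • (fun _ => (1:ℝ)) := by
      intro k
      funext a
      simp only [Pi.sub_apply, Pi.smul_apply, smul_eq_mul, hid k a]
      ring
    have hεlim : Filter.Tendsto (fun k => ε (φ k)) Filter.atTop (nhds 0) := by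
      have h9 : Filter.Tendsto ε Filter.atTop (nhds 0) := by
        rw [hε]
        exact tendsto_one_div_add_atTop_nhds_zero_nat.congr (fun k => by
          rw [one_div])
      exact h9.comp hφ.tendsto_atTop
    have hL : Filter.Tendsto (fun k => Λ *ᵥ u (φ k) - μ (φ k) • u (φ k))
        Filter.atTop (nhds (Λ *ᵥ v - ν • v)) := by
      apply Filter.Tendsto.sub
      · exact (continuous_const.matrix_mulVec continuous_id).continuousAt.tendsto.comp hulim
      · exact hμlim.smul hulim
    have hR : Filter.Tendsto (fun k => Λ *ᵥ u (φ k) - μ (φ k) • u (φ k))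
        Filter.atTop (nhds (0 : Fin n → ℝ)) := by
      have : (fun k => Λ *ᵥ u (φ k) - μ (φ k) • u (φ k))
          = fun k => (-(ε (φ k))) • (fun _ => (1:ℝ)) := funext fun k => hid2 (φ k)
      rw [this]
      have : Filter.Tendsto (fun k => -(ε (φ k))) Filter.atTop (nhds 0) := by
        simpa using hεlim.neg
      simpa using this.smul_const (fun _ => (1:ℝ) : Fin n → ℝ)
    have heq0 : Λ *ᵥ v - ν • v = 0 := tendsto_nhds_unique hL hR
    have hvne : v ≠ 0 := by
      intro h0
      have := hvmem.1.2
      rw [h0] at this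
      simp at this
    exact hno ν v hvmem.2.1 hvmem.1.1 hvne (sub_eq_zero.mp heq0)
lemma eig_mem_spectrum (Λ : Matrix (Fin n) (Fin n) ℝ) (μ : ℝ) (u : Fin n → ℝ) (hu : u ≠ 0)
    (h : Λ *ᵥ u = μ • u) : (μ : ℂ) ∈ spectrum ℂ (Λ.map Complex.ofReal) := by
  rw [spectrum.mem_iff]
  intro hU
  rw [Matrix.isUnit_iff_isUnit_det] at hU
  have hdetR : (algebraMap ℝ (Matrix (Fin n) (Fin n) ℝ) μ - Λ).det = 0 := by
    rw [← Matrix.exists_mulVec_eq_zero_iff]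
    refine ⟨u, hu, ?_⟩
    rw [Matrix.sub_mulVec, Algebra.algebraMap_eq_smul_one, Matrix.smul_mulVec,
      Matrix.one_mulVec, h, sub_self]
  have hmat : algebraMap ℂ (Matrix (Fin n) (Fin n) ℂ) (μ : ℂ) - Λ.map Complex.ofReal
      = (algebraMap ℝ (Matrix (Fin n) (Fin n) ℝ) μ - Λ).map Complex.ofReal := by
    ext a b
    simp only [Matrix.sub_apply, Matrix.map_apply, Matrix.algebraMap_matrix_apply,
      Complex.ofReal_sub, apply_ite (Complex.ofReal), Complex.ofReal_zero]
    split <;> simp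
  rw [hmat] at hU
  have : ((algebraMap ℝ (Matrix (Fin n) (Fin n) ℝ) μ - Λ).map Complex.ofReal).det
      = Complex.ofReal ((algebraMap ℝ (Matrix (Fin n) (Fin n) ℝ) μ - Λ).det) := by
    rw [show (Complex.ofReal : ℝ → ℂ) = ⇑Complex.ofRealHom from rfl,
      ← RingHom.mapMatrix_apply, ← RingHom.map_det]
  rw [this, hdetR] at hU
  simp at hU

lemma mem_spec_transpose {M : Matrix (Fin n) (Fin n) ℂ} {μ : ℂ} (h : μ ∈ spectrum ℂ Mᵀ) :
    μ ∈ spectrum ℂ M := by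
  rw [spectrum.mem_iff] at h ⊢
  intro hU
  apply h
  rw [Matrix.isUnit_iff_isUnit_det] at hU ⊢
  have heq : algebraMap ℂ (Matrix (Fin n) (Fin n) ℂ) μ - Mᵀ
      = (algebraMap ℂ (Matrix (Fin n) (Fin n) ℂ) μ - M)ᵀ := by
    ext a b
    simp only [Matrix.sub_apply, Matrix.transpose_apply, Matrix.algebraMap_matrix_apply]
    by_cases hab : a = b
    · subst hab; rfl
    · rw [if_neg hab, if_neg (Ne.symm hab)]
  rw [heq, Matrix.det_transpose]
  exact hU

lemma quad_neg (S : Matrix (Fin n) (Fin n) ℝ) (hsym : ∀ a b, S a b = S b a)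
    (hoff : ∀ a b, a ≠ b → 0 ≤ S a b) (c : Fin n → ℝ) (hc : ∀ a, 0 < c a)
    (hSc : ∀ a, (S *ᵥ c) a < 0) (w : Fin n → ℝ) (hw : ∀ a, 0 ≤ w a) (hwne : ∃ a, 0 < w a) :
    ∑ a, ∑ b, w a * S a b * w b < 0 := by
  have hterm : ∀ a b, w a * S a b * w b
      ≤ S a b * (c b * w a ^ 2 / (2 * c a)) + S a b * (c a * w b ^ 2 / (2 * c b)) := by
    intro a b
    rcases eq_or_ne a b with rfl | hab
    · apply le_of_eq
      have h1 : c a ≠ 0 := (hc a).ne'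
      have h2 : c a * w a ^ 2 / (2 * c a) = w a ^ 2 / 2 := by
        rw [mul_comm 2 (c a), ← mul_div_mul_left (w a ^ 2) 2 h1]
      rw [h2]
      ring
    · have hkey : w a * w b ≤ c b * w a ^ 2 / (2 * c a) + c a * w b ^ 2 / (2 * c b) := by
        have hca : c a ≠ 0 := (hc a).ne'
        have hcb : c b ≠ 0 := (hc b).ne'
        have hh : c b * w a ^ 2 / (2 * c a) + c a * w b ^ 2 / (2 * c b) - w a * w b
            = (c b * w a - c a * w b) ^ 2 / (2 * c a * c b) := by
          field_simp
          ring
        have hpq : (0:ℝ) ≤ 2 * c a * c b := by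
          have := (hc a).le; have := (hc b).le; nlinarith
        nlinarith [div_nonneg (sq_nonneg (c b * w a - c a * w b)) hpq, hh]
      calc w a * S a b * w b = S a b * (w a * w b) := by ring
        _ ≤ S a b * (c b * w a ^ 2 / (2 * c a) + c a * w b ^ 2 / (2 * c b)) :=
            mul_le_mul_of_nonneg_left hkey (hoff a b hab)
        _ = S a b * (c b * w a ^ 2 / (2 * c a)) + S a b * (c a * w b ^ 2 / (2 * c b)) := by
            ring
  calc ∑ a, ∑ b, w a * S a b * w b
      ≤ ∑ a, ∑ b, (S a b * (c b * w a ^ 2 / (2 * c a)) + S a b * (c a * w b ^ 2 / (2 * c b))) :=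
        Finset.sum_le_sum fun a _ => Finset.sum_le_sum fun b _ => hterm a b
    _ = (∑ a, ∑ b, S a b * (c b * w a ^ 2 / (2 * c a)))
        + (∑ a, ∑ b, S a b * (c a * w b ^ 2 / (2 * c b))) := by
        simp [Finset.sum_add_distrib]
    _ = (∑ a, (w a ^ 2 / (2 * c a)) * (S *ᵥ c) a)
        + (∑ b, (w b ^ 2 / (2 * c b)) * (S *ᵥ c) b) := by
        congr 1
        · refine Finset.sum_congr rfl fun a _ => ?_
          rw [show (S *ᵥ c) a = ∑ b, S a b * c b from rfl, Finset.mul_sum]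
          exact Finset.sum_congr rfl fun b _ => by ring
        · rw [Finset.sum_comm]
          refine Finset.sum_congr rfl fun b _ => ?_
          rw [show (S *ᵥ c) b = ∑ a, S b a * c a from rfl, Finset.mul_sum]
          refine Finset.sum_congr rfl fun a _ => ?_
          rw [hsym a b]
          ring
    _ = ∑ a, (w a ^ 2 / c a) * (S *ᵥ c) a := by
        rw [← Finset.sum_add_distrib]
        refine Finset.sum_congr rfl fun a _ => ?_
        have h1 : c a ≠ 0 := (hc a).ne'
        field_simp
        ring
    _ < 0 := by
        obtain ⟨a0, ha0⟩ := hwne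
        have : ∑ a, (w a ^ 2 / c a) * (S *ᵥ c) a < ∑ a : Fin n, (0:ℝ) := by
          refine Finset.sum_lt_sum (fun a _ => ?_) ⟨a0, Finset.mem_univ a0, ?_⟩
          · exact mul_nonpos_of_nonneg_of_nonpos
              (div_nonneg (sq_nonneg _) (hc a).le) (hSc a).le
          · apply mul_neg_of_pos_of_neg
            · exact div_pos (pow_pos ha0 2) (hc a0)
            · exact hSc a0
        simpa using this

/-- If `Λ = max_i 𝓜(V⁻¹ A_i V)` is Hurwitz, then each `A_i` is Hurwitz and the `A_i` admit a
common quadratic Lyapunov function. -/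
theorem cqlf_exists_of_lambda_hurwitz {n N : ℕ}
    (hne : (Finset.univ : Finset (Fin N)).Nonempty)
    (V : Matrix (Fin n) (Fin n) ℂ) (hV : IsUnit V.det)
    (A : Fin N → Matrix (Fin n) (Fin n) ℝ)
    (Λi : Fin N → Matrix (Fin n) (Fin n) ℂ)
    (hΛi : ∀ i, Λi i = V⁻¹ * (A i).map Complex.ofReal * V)
    (M : Fin N → Matrix (Fin n) (Fin n) ℝ)
    (hM : ∀ i a b, M i a b = if a = b then (Λi i a a).re else ‖Λi i a b‖)
    (Λ : Matrix (Fin n) (Fin n) ℝ)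
    (hΛ : ∀ a b, Λ a b = Finset.univ.sup' hne (fun i => M i a b))
    (hHur : ∀ μ ∈ spectrum ℂ (Λ.map Complex.ofReal), μ.re < 0) :
    (∀ i, ∀ μ ∈ spectrum ℂ ((A i).map Complex.ofReal), μ.re < 0) ∧
      ∃ P : Matrix (Fin n) (Fin n) ℝ, P.IsSymm ∧ P.PosDef ∧
        ∀ i, (-((A i)ᵀ * P + P * A i)).PosDef := by
  obtain ⟨i₀, -⟩ := id hne
  have hVV' : V * V⁻¹ = 1 := Matrix.mul_nonsing_inv V hV
  have hV'V : V⁻¹ * V = 1 := Matrix.nonsing_inv_mul V hV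
  set Q : Matrix (Fin n) (Fin n) ℂ := V⁻¹ with hQ
  -- Λ is Metzler and dominates the M i
  have hMoff : ∀ (i : Fin N) a b, a ≠ b → 0 ≤ M i a b := by
    intro i a b hab
    rw [hM, if_neg hab]
    exact norm_nonneg _
  have hMleΛ : ∀ (i : Fin N) a b, M i a b ≤ Λ a b := by
    intro i a b
    rw [hΛ]
    exact Finset.le_sup' (fun j => M j a b) (Finset.mem_univ i)
  have hΛoff : ∀ a b, a ≠ b → 0 ≤ Λ a b := fun a b hab =>
    le_trans (hMoff i₀ a b hab) (hMleΛ i₀ a b)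
  -- no nonnegative real eigenvalues for Λ nor Λᵀ
  have hnoΛ : ∀ (μ : ℝ) (u : Fin n → ℝ), 0 ≤ μ → (∀ a, 0 ≤ u a) → u ≠ 0 →
      Λ *ᵥ u ≠ μ • u := by
    intro μ u hμ _ hune heq
    have h1 := eig_mem_spectrum Λ μ u hune heq
    have h2 := hHur _ h1
    rw [Complex.ofReal_re] at h2
    linarith
  have hnoΛT : ∀ (μ : ℝ) (u : Fin n → ℝ), 0 ≤ μ → (∀ a, 0 ≤ u a) → u ≠ 0 →
      Λᵀ *ᵥ u ≠ μ • u := by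
    intro μ u hμ _ hune heq
    have h1 := eig_mem_spectrum Λᵀ μ u hune heq
    rw [Matrix.transpose_map] at h1
    have h2 := hHur _ (mem_spec_transpose h1)
    rw [Complex.ofReal_re] at h2
    linarith
  obtain ⟨c, hc, hΛc⟩ := metzler_exists_pos_vec Λ hΛoff hnoΛ
  obtain ⟨d, hd, hΛd⟩ := metzler_exists_pos_vec Λᵀ
    (fun a b hab => hΛoff b a (Ne.symm hab)) hnoΛT
  set D : Fin n → ℝ := fun a => d a / c a with hD
  have hDpos : ∀ a, 0 < D a := fun a => div_pos (hd a) (hc a)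
  set S : Matrix (Fin n) (Fin n) ℝ :=
    Matrix.of (fun a b => D a * Λ a b + D b * Λ b a) with hS
  have hSab : ∀ a b, S a b = D a * Λ a b + D b * Λ b a := fun a b => rfl
  have hSsym : ∀ a b, S a b = S b a := fun a b => by rw [hSab, hSab]; ring
  have hSoff : ∀ a b, a ≠ b → 0 ≤ S a b := by
    intro a b hab
    rw [hSab]
    exact add_nonneg (mul_nonneg (hDpos a).le (hΛoff a b hab))
      (mul_nonneg (hDpos b).le (hΛoff b a (Ne.symm hab)))
  have hScneg : ∀ a, (S *ᵥ c) a < 0 := by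
    intro a
    have hexp : (S *ᵥ c) a = D a * (Λ *ᵥ c) a + (Λᵀ *ᵥ d) a := by
      show ∑ b, S a b * c b = _
      have hterm : ∀ b, S a b * c b = D a * (Λ a b * c b) + Λᵀ a b * d b := by
        intro b
        rw [hSab, Matrix.transpose_apply, hD]
        have hcb : c b ≠ 0 := (hc b).ne'
        field_simp
      rw [Finset.sum_congr rfl fun b _ => hterm b, Finset.sum_add_distrib, ← Finset.mul_sum]
      rfl
    rw [hexp]
    have h1 := mul_neg_of_pos_of_neg (hDpos a) (hΛc a)
    linarith [hΛd a]
  -- the quadratic form bound on |z|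
  have hquad : ∀ w : Fin n → ℝ, (∀ a, 0 ≤ w a) → (∃ a, 0 < w a) →
      ∑ k, ∑ b, D k * (w k * Λ k b * w b) < 0 := by
    intro w hw hwne
    have h1 := quad_neg S hSsym hSoff c hc hScneg w hw hwne
    have h2 : ∑ a, ∑ b, w a * S a b * w b = 2 * ∑ k, ∑ b, D k * (w k * Λ k b * w b) := by
      have e1 : ∀ a b, w a * S a b * w b
          = D a * (w a * Λ a b * w b) + D b * (w b * Λ b a * w a) := by
        intro a b; rw [hSab]; ring
      calc ∑ a, ∑ b, w a * S a b * w b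
          = ∑ a, ∑ b, (D a * (w a * Λ a b * w b) + D b * (w b * Λ b a * w a)) := by
            exact Finset.sum_congr rfl fun a _ => Finset.sum_congr rfl fun b _ => e1 a b
        _ = (∑ a, ∑ b, D a * (w a * Λ a b * w b))
            + ∑ a, ∑ b, D b * (w b * Λ b a * w a) := by
            simp [Finset.sum_add_distrib]
        _ = (∑ a, ∑ b, D a * (w a * Λ a b * w b))
            + ∑ b, ∑ a, D b * (w b * Λ b a * w a) := by
            rw [Finset.sum_comm (f := fun a b => D b * (w b * Λ b a * w a))]
        _ = 2 * ∑ k, ∑ b, D k * (w k * Λ k b * w b) := by ring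
    rw [h2] at h1
    linarith
  -- key complex bound
  have hbound : ∀ (i : Fin N) (z : Fin n → ℂ), z ≠ 0 →
      (∑ k, (D k : ℂ) * (starRingEnd ℂ) (z k) * ((Λi i *ᵥ z) k)).re < 0 := by
    intro i z hz
    set w : Fin n → ℝ := fun k => ‖z k‖ with hw
    have hw0 : ∀ k, 0 ≤ w k := fun k => norm_nonneg _
    have hwne : ∃ k, 0 < w k := by
      obtain ⟨k, hk⟩ := Function.ne_iff.mp hz
      exact ⟨k, norm_pos_iff.mpr hk⟩
    have hterm : ∀ k b, ((D k : ℂ) * (starRingEnd ℂ) (z k) * (Λi i k b * z b)).re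
        ≤ D k * (w k * Λ k b * w b) := by
      intro k b
      have hre : ((D k : ℂ) * ((starRingEnd ℂ) (z k) * (Λi i k b * z b))).re
          = D k * ((starRingEnd ℂ) (z k) * (Λi i k b * z b)).re :=
        Complex.re_ofReal_mul _ _
      rcases eq_or_ne k b with rfl | hkb
      · have h1 : (starRingEnd ℂ) (z k) * (Λi i k k * z k)
            = (Complex.normSq (z k) : ℂ) * Λi i k k := by
          rw [Complex.normSq_eq_conj_mul_self]
          ring
        have h2 : ((starRingEnd ℂ) (z k) * (Λi i k k * z k)).re
            = Complex.normSq (z k) * (Λi i k k).re := by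
          rw [h1, Complex.re_ofReal_mul]
        have h3 : (Λi i k k).re ≤ Λ k k := by
          have := hMleΛ i k k
          rwa [hM, if_pos rfl] at this
        have h4 : Complex.normSq (z k) = w k * w k := by
          rw [hw]
          simp [Complex.normSq_eq_norm_sq, sq]
        calc ((D k : ℂ) * (starRingEnd ℂ) (z k) * (Λi i k k * z k)).re
            = D k * (Complex.normSq (z k) * (Λi i k k).re) := by
              rw [mul_assoc, hre, h2]
          _ ≤ D k * (Complex.normSq (z k) * Λ k k) := by
              apply mul_le_mul_of_nonneg_left _ (hDpos k).le
              exact mul_le_mul_of_nonneg_left h3 (Complex.normSq_nonneg _)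
          _ = D k * (w k * Λ k k * w k) := by rw [h4]; ring
      · have h1 : ((starRingEnd ℂ) (z k) * (Λi i k b * z b)).re
            ≤ w k * Λ k b * w b := by
          have h2 : ((starRingEnd ℂ) (z k) * (Λi i k b * z b)).re
              ≤ ‖(starRingEnd ℂ) (z k) * (Λi i k b * z b)‖ :=
            Complex.re_le_norm _
          have h3 : ‖(starRingEnd ℂ) (z k) * (Λi i k b * z b)‖
              = w k * (‖Λi i k b‖ * w b) := by
            rw [norm_mul, norm_mul, Complex.norm_conj]
          have h4 : ‖Λi i k b‖ ≤ Λ k b := by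
            have := hMleΛ i k b
            rwa [hM, if_neg hkb] at this
          have h5 : w k * (‖Λi i k b‖ * w b) ≤ w k * (Λ k b * w b) := by
            apply mul_le_mul_of_nonneg_left _ (hw0 k)
            exact mul_le_mul_of_nonneg_right h4 (hw0 b)
          calc ((starRingEnd ℂ) (z k) * (Λi i k b * z b)).re
              ≤ w k * (‖Λi i k b‖ * w b) := h3 ▸ h2
            _ ≤ w k * (Λ k b * w b) := h5
            _ = w k * Λ k b * w b := by ring
        calc ((D k : ℂ) * (starRingEnd ℂ) (z k) * (Λi i k b * z b)).re
            = D k * ((starRingEnd ℂ) (z k) * (Λi i k b * z b)).re := by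
              rw [mul_assoc]; exact hre
          _ ≤ D k * (w k * Λ k b * w b) :=
              mul_le_mul_of_nonneg_left h1 (hDpos k).le
    calc (∑ k, (D k : ℂ) * (starRingEnd ℂ) (z k) * ((Λi i *ᵥ z) k)).re
        = ∑ k, ∑ b, ((D k : ℂ) * (starRingEnd ℂ) (z k) * (Λi i k b * z b)).re := by
          rw [Complex.re_sum]
          refine Finset.sum_congr rfl fun k _ => ?_
          have : (D k : ℂ) * (starRingEnd ℂ) (z k) * ((Λi i *ᵥ z) k)
              = ∑ b, (D k : ℂ) * (starRingEnd ℂ) (z k) * (Λi i k b * z b) := by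
            rw [show (Λi i *ᵥ z) k = ∑ b, Λi i k b * z b from rfl, Finset.mul_sum]
          rw [this, Complex.re_sum]
      _ ≤ ∑ k, ∑ b, D k * (w k * Λ k b * w b) :=
          Finset.sum_le_sum fun k _ => Finset.sum_le_sum fun b _ => hterm k b
      _ < 0 := hquad w hw0 hwne
  -- the matrix P
  set Pc : Matrix (Fin n) (Fin n) ℂ :=
    Matrix.of (fun a b => ∑ k, (D k : ℂ) * (starRingEnd ℂ) (Q k a) * Q k b) with hPc
  set P : Matrix (Fin n) (Fin n) ℝ := Matrix.of (fun a b => (Pc a b).re) with hP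
  have hPab : ∀ a b, P a b = ∑ k, ((D k : ℂ) * (starRingEnd ℂ) (Q k a) * Q k b).re := by
    intro a b
    show (Pc a b).re = _
    rw [show Pc a b = ∑ k, (D k : ℂ) * (starRingEnd ℂ) (Q k a) * Q k b from rfl,
      Complex.re_sum]
  have hPsym : ∀ a b, P a b = P b a := by
    intro a b
    rw [hPab, hPab]
    refine Finset.sum_congr rfl fun k _ => ?_
    have hconj : (D k : ℂ) * (starRingEnd ℂ) (Q k b) * Q k a
        = (starRingEnd ℂ) ((D k : ℂ) * (starRingEnd ℂ) (Q k a) * Q k b) := by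
      simp only [_root_.map_mul, Complex.conj_conj, Complex.conj_ofReal]
      ring
    rw [hconj, Complex.conj_re]
  -- complexification of real vectors
  set cx : (Fin n → ℝ) → (Fin n → ℂ) := fun x a => (x a : ℂ) with hcx
  have hcx_ne : ∀ x : Fin n → ℝ, x ≠ 0 → cx x ≠ 0 := by
    intro x hx hc0
    apply hx
    funext a
    have : (x a : ℂ) = 0 := congrFun hc0 a
    exact_mod_cast this
  have hz_ne : ∀ v : Fin n → ℂ, v ≠ 0 → Q *ᵥ v ≠ 0 := by
    intro v hv h0
    apply hv
    have h1 : V *ᵥ (Q *ᵥ v) = v := by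
      rw [Matrix.mulVec_mulVec, hVV', Matrix.one_mulVec]
    rw [h0, Matrix.mulVec_zero] at h1
    exact h1.symm
  -- the core identity
  have hcore : ∀ x y : Fin n → ℝ, x ⬝ᵥ (P *ᵥ y)
      = (∑ k, (D k : ℂ) * (starRingEnd ℂ) ((Q *ᵥ cx x) k) * ((Q *ᵥ cx y) k)).re := by
    intro x y
    have lhs : x ⬝ᵥ (P *ᵥ y)
        = ∑ a, ∑ b, ∑ k, x a * y b * ((D k : ℂ) * (starRingEnd ℂ) (Q k a) * Q k b).re := by
      show ∑ a, x a * (∑ b, P a b * y b) = _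
      refine Finset.sum_congr rfl fun a _ => ?_
      rw [Finset.mul_sum]
      refine Finset.sum_congr rfl fun b _ => ?_
      rw [hPab, Finset.sum_mul, Finset.mul_sum]
      refine Finset.sum_congr rfl fun k _ => by ring
    have rhs : (∑ k, (D k : ℂ) * (starRingEnd ℂ) ((Q *ᵥ cx x) k) * ((Q *ᵥ cx y) k)).re
        = ∑ k, ∑ a, ∑ b, x a * y b * ((D k : ℂ) * (starRingEnd ℂ) (Q k a) * Q k b).re := by
      rw [Complex.re_sum]
      refine Finset.sum_congr rfl fun k _ => ?_
      have h1 : (starRingEnd ℂ) ((Q *ᵥ cx x) k)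
          = ∑ a, (starRingEnd ℂ) (Q k a) * (x a : ℂ) := by
        rw [show (Q *ᵥ cx x) k = ∑ a, Q k a * (x a : ℂ) from rfl, map_sum]
        refine Finset.sum_congr rfl fun a _ => ?_
        rw [_root_.map_mul, Complex.conj_ofReal]
      have h2 : ((Q *ᵥ cx y) k) = ∑ b, Q k b * (y b : ℂ) := rfl
      have hC : (D k : ℂ) * (starRingEnd ℂ) ((Q *ᵥ cx x) k) * ((Q *ᵥ cx y) k)
          = ∑ a, ∑ b, ((x a * y b : ℝ) : ℂ)
            * ((D k : ℂ) * (starRingEnd ℂ) (Q k a) * Q k b) := by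
        rw [h1, h2, mul_assoc, Finset.sum_mul_sum, Finset.mul_sum]
        refine Finset.sum_congr rfl fun a _ => ?_
        rw [Finset.mul_sum]
        refine Finset.sum_congr rfl fun b _ => ?_
        push_cast
        ring
      rw [hC, Complex.re_sum]
      refine Finset.sum_congr rfl fun a _ => ?_
      rw [Complex.re_sum]
      exact Finset.sum_congr rfl fun b _ => Complex.re_ofReal_mul _ _
    rw [lhs, rhs]
    calc ∑ a, ∑ b, ∑ k, x a * y b * ((D k : ℂ) * (starRingEnd ℂ) (Q k a) * Q k b).re
        = ∑ a, ∑ k, ∑ b, x a * y b * ((D k : ℂ) * (starRingEnd ℂ) (Q k a) * Q k b).re :=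
          Finset.sum_congr rfl fun a _ => Finset.sum_comm
      _ = ∑ k, ∑ a, ∑ b, x a * y b * ((D k : ℂ) * (starRingEnd ℂ) (Q k a) * Q k b).re :=
          Finset.sum_comm
  -- positivity of the P-quadratic form
  have hPpos : ∀ x : Fin n → ℝ, x ≠ 0 → 0 < x ⬝ᵥ (P *ᵥ x) := by
    intro x hx
    rw [hcore x x]
    set z : Fin n → ℂ := Q *ᵥ cx x with hz
    have hzne : z ≠ 0 := hz_ne _ (hcx_ne x hx)
    have h1 : ∀ k, ((D k : ℂ) * (starRingEnd ℂ) (z k) * z k).re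
        = D k * Complex.normSq (z k) := by
      intro k
      have : (D k : ℂ) * (starRingEnd ℂ) (z k) * z k
          = ((D k * Complex.normSq (z k) : ℝ) : ℂ) := by
        rw [Complex.ofReal_mul, Complex.normSq_eq_conj_mul_self, mul_assoc]
      rw [this, Complex.ofReal_re]
    rw [Complex.re_sum]
    rw [Finset.sum_congr rfl fun k _ => h1 k]
    obtain ⟨k0, hk0⟩ := Function.ne_iff.mp hzne
    refine Finset.sum_pos' (fun k _ => mul_nonneg (hDpos k).le (Complex.normSq_nonneg _))
      ⟨k0, Finset.mem_univ _, mul_pos (hDpos k0) ?_⟩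
    exact Complex.normSq_pos.mpr hk0
  -- relation Q * A = Λi * Q
  have hQA : ∀ i, Q * ((A i).map Complex.ofReal) = Λi i * Q := by
    intro i
    calc Q * ((A i).map Complex.ofReal)
        = Q * ((A i).map Complex.ofReal) * 1 := by rw [Matrix.mul_one]
      _ = Q * ((A i).map Complex.ofReal) * (V * Q) := by rw [hVV']
      _ = (Q * ((A i).map Complex.ofReal) * V) * Q := by
          rw [Matrix.mul_assoc (Q * (A i).map Complex.ofReal) V Q]
      _ = Λi i * Q := by rw [← hΛi i]
  -- transferring the quadratic form
  have hPAid : ∀ (i : Fin N) (x : Fin n → ℝ), x ⬝ᵥ (P *ᵥ (A i *ᵥ x))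
      = (∑ k, (D k : ℂ) * (starRingEnd ℂ) ((Q *ᵥ cx x) k)
          * ((Λi i *ᵥ (Q *ᵥ cx x)) k)).re := by
    intro i x
    rw [hcore x (A i *ᵥ x)]
    have hmapA : cx (A i *ᵥ x) = ((A i).map Complex.ofReal) *ᵥ cx x := by
      funext a
      show ((A i *ᵥ x) a : ℂ) = ∑ b, ((A i a b : ℂ)) * (x b : ℂ)
      rw [show (A i *ᵥ x) a = ∑ b, A i a b * x b from rfl]
      push_cast
      rfl
    rw [hmapA, Matrix.mulVec_mulVec, hQA i, ← Matrix.mulVec_mulVec]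
  -- symmetry of P as IsSymm / IsHermitian
  have hPIsSymm : P.IsSymm := by
    show Pᵀ = P
    ext a b
    rw [Matrix.transpose_apply]
    exact hPsym b a
  have hPherm : P.IsHermitian := by
    show Pᴴ = P
    ext a b
    rw [Matrix.conjTranspose_apply, star_trivial]
    exact hPsym b a
  have hPposdef : P.PosDef := by
    refine Matrix.PosDef.of_dotProduct_mulVec_pos hPherm fun x hx => ?_
    rw [star_trivial]
    exact hPpos x hx
  have hdotsym : ∀ u w : Fin n → ℝ, u ⬝ᵥ (P *ᵥ w) = w ⬝ᵥ (P *ᵥ u) := by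
    intro u w
    show ∑ a, u a * ∑ b, P a b * w b = ∑ b, w b * ∑ a, P b a * u a
    simp only [Finset.mul_sum]
    rw [Finset.sum_comm]
    refine Finset.sum_congr rfl fun b _ => Finset.sum_congr rfl fun a _ => ?_
    rw [hPsym a b]
    ring
  -- Lyapunov inequality quadratic form value
  have hlyapval : ∀ (i : Fin N) (x : Fin n → ℝ),
      x ⬝ᵥ (((A i)ᵀ * P + P * A i) *ᵥ x) = 2 * (x ⬝ᵥ (P *ᵥ (A i *ᵥ x))) := by
    intro i x
    rw [Matrix.add_mulVec, dotProduct_add]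
    have h1 : x ⬝ᵥ (((A i)ᵀ * P) *ᵥ x) = x ⬝ᵥ (P *ᵥ (A i *ᵥ x)) := by
      rw [← Matrix.mulVec_mulVec, Matrix.dotProduct_mulVec, Matrix.vecMul_transpose]
      exact hdotsym (A i *ᵥ x) x
    have h2 : x ⬝ᵥ ((P * A i) *ᵥ x) = x ⬝ᵥ (P *ᵥ (A i *ᵥ x)) := by
      rw [← Matrix.mulVec_mulVec]
    rw [h1, h2]
    ring
  -- the Lyapunov matrices are positive definite
  have hLyap : ∀ i, (-((A i)ᵀ * P + P * A i)).PosDef := by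
    intro i
    have hsymN : ∀ a b, ((A i)ᵀ * P + P * A i) a b = ((A i)ᵀ * P + P * A i) b a := by
      intro a b
      simp only [Matrix.add_apply, Matrix.mul_apply, Matrix.transpose_apply]
      rw [add_comm]
      congr 1
      · exact Finset.sum_congr rfl fun k _ => by rw [hPsym a k]; ring
      · exact Finset.sum_congr rfl fun k _ => by rw [hPsym k b]; ring
    refine Matrix.PosDef.of_dotProduct_mulVec_pos ?_ ?_
    · show (-((A i)ᵀ * P + P * A i))ᴴ = _
      ext a b
      rw [Matrix.conjTranspose_apply, star_trivial, Matrix.neg_apply, Matrix.neg_apply,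
        hsymN a b]
    · intro x hx
      rw [star_trivial]
      have hval : x ⬝ᵥ ((-((A i)ᵀ * P + P * A i)) *ᵥ x)
          = -(2 * (x ⬝ᵥ (P *ᵥ (A i *ᵥ x)))) := by
        rw [Matrix.neg_mulVec, dotProduct_neg, hlyapval i x]
      rw [hval]
      have hneg : x ⬝ᵥ (P *ᵥ (A i *ᵥ x)) < 0 := by
        rw [hPAid i x]
        exact hbound i (Q *ᵥ cx x) (hz_ne _ (hcx_ne x hx))
      linarith
  -- each A i is Hurwitz
  have hHurA : ∀ i, ∀ μ ∈ spectrum ℂ ((A i).map Complex.ofReal), μ.re < 0 := by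
    intro i μ hμ
    rw [spectrum.mem_iff] at hμ
    have hdet : (algebraMap ℂ (Matrix (Fin n) (Fin n) ℂ) μ - (A i).map Complex.ofReal).det
        = 0 := by
      by_contra hne0
      exact hμ ((Matrix.isUnit_iff_isUnit_det _).mpr (isUnit_iff_ne_zero.mpr hne0))
    obtain ⟨v, hvne, hv0⟩ := Matrix.exists_mulVec_eq_zero_iff.mpr hdet
    have hAv : ((A i).map Complex.ofReal) *ᵥ v = μ • v := by
      rw [Matrix.sub_mulVec, Algebra.algebraMap_eq_smul_one, Matrix.smul_mulVec,
        Matrix.one_mulVec] at hv0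
      exact (sub_eq_zero.mp hv0).symm
    set z : Fin n → ℂ := Q *ᵥ v with hzdef
    have hzne : z ≠ 0 := hz_ne v hvne
    have heigz : Λi i *ᵥ z = μ • z := by
      rw [hzdef, Matrix.mulVec_mulVec, ← hQA i, ← Matrix.mulVec_mulVec, hAv,
        Matrix.mulVec_smul]
    have hb := hbound i z hzne
    have hE : (∑ k, (D k : ℂ) * (starRingEnd ℂ) (z k) * ((Λi i *ᵥ z) k))
        = ((∑ k, D k * Complex.normSq (z k) : ℝ) : ℂ) * μ := by
      rw [heigz]
      push_cast
      rw [Finset.sum_mul]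
      refine Finset.sum_congr rfl fun k _ => ?_
      rw [Pi.smul_apply, smul_eq_mul]
      rw [show (D k : ℂ) * (starRingEnd ℂ) (z k) * (μ * z k)
          = (D k : ℂ) * ((starRingEnd ℂ) (z k) * z k) * μ from by ring,
        ← Complex.normSq_eq_conj_mul_self]
    have hT : 0 < ∑ k, D k * Complex.normSq (z k) := by
      obtain ⟨k0, hk0⟩ := Function.ne_iff.mp hzne
      exact Finset.sum_pos' (fun k _ => mul_nonneg (hDpos k).le (Complex.normSq_nonneg _))
        ⟨k0, Finset.mem_univ _, mul_pos (hDpos k0) (Complex.normSq_pos.mpr hk0)⟩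
    rw [hE, Complex.re_ofReal_mul] at hb
    nlinarith
  exact ⟨hHurA, P, hPIsSymm, hPposdef, hLyap⟩
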